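/- Let g = (I,E) be an acyclic directed graph. Then for all positive integers n, the strict chromatic polynomial and weak chromatic polynomial satisfy reciprocity: (−1)^{|I|} π_g^>(−n) = π_g^≥(n), where π_g^>(n) = |{f : I → [n] : f(u) < f(v) for all (u,v) ∈ E}| and π_g^≥(n) = |{f : I → [n] : f(u) ≤ f(v) for all (u,v) ∈ E}|, with π_g^> extended to negative arguments as a polynomial. -/

import Mathlib

open Finset Polynomial

namespace SWCR

variable {M n : ℕ}

/-- descent set of a permutation of `Fin (M+1)` -/
def des (σ : Equiv.Perm (Fin (M+1))) : Finset (Fin M) :=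
  univ.filter fun i => σ i.succ < σ i.castSucc

/-- ascent set of a permutation of `Fin (M+1)` -/
def asc (σ : Equiv.Perm (Fin (M+1))) : Finset (Fin M) :=
  univ.filter fun i => σ i.castSucc < σ i.succ

lemma des_card_le (σ : Equiv.Perm (Fin (M+1))) : (des σ).card ≤ M := by
  classical
  calc (des σ).card ≤ (univ : Finset (Fin M)).card := card_le_card (filter_subset _ _)
  _ = M := by simp

lemma asc_card (σ : Equiv.Perm (Fin (M+1))) : (asc σ).card = M - (des σ).card := by
  classical
  have hds : des σ = univ.filter fun i : Fin M => ¬ (σ i.castSucc < σ i.succ) := by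
    apply filter_congr
    intro i _
    have hne : σ i.castSucc ≠ σ i.succ :=
      fun h => (Fin.castSucc_lt_succ : i.castSucc < i.succ).ne (σ.injective h)
    constructor
    · exact fun h => not_lt.mpr h.le
    · intro h
      exact lt_of_le_of_ne (not_lt.mp h) (Ne.symm hne)
  have h2 := Finset.card_filter_add_card_filter_not
    (s := (univ : Finset (Fin M))) (p := fun i => σ i.castSucc < σ i.succ)
  have hM : (univ : Finset (Fin M)).card = M := by simp
  unfold asc
  rw [hds]
  omega

/-- weight: number of weak gaps strictly below `i` -/
def wt (D : Finset (Fin M)) (i : Fin (M+1)) : ℕ :=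
  #(univ.filter fun j : Fin M => (j : ℕ) + 1 ≤ (i : ℕ) ∧ j ∉ D)

lemma wt_zero (D : Finset (Fin M)) : wt D 0 = 0 := by
  unfold wt
  rw [Finset.card_eq_zero, Finset.filter_eq_empty_iff]
  intro j _
  simp

lemma wt_succ (D : Finset (Fin M)) (i : Fin M) :
    wt D i.succ = wt D i.castSucc + (if i ∈ D then 0 else 1) := by
  classical
  unfold wt
  by_cases hD : i ∈ D
  · have h0 : (if i ∈ D then 0 else 1) = 0 := if_pos hD
    have hset : (univ.filter fun j : Fin M => (j : ℕ) + 1 ≤ (i.succ : ℕ) ∧ j ∉ D)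
        = (univ.filter fun j : Fin M => (j : ℕ) + 1 ≤ (i.castSucc : ℕ) ∧ j ∉ D) := by
      apply filter_congr
      intro j _
      simp only [Fin.val_succ, Fin.coe_castSucc]
      constructor
      · rintro ⟨hj, hjD⟩
        refine ⟨?_, hjD⟩
        rcases Nat.lt_or_ge (j : ℕ) (i : ℕ) with h | h
        · omega
        · have : (j : ℕ) = (i : ℕ) := by omega
          exact absurd (Fin.val_injective this ▸ hD) hjD
      · rintro ⟨hj, hjD⟩
        exact ⟨by omega, hjD⟩
    rw [hset, h0]
    omega
  · have h0 : (if i ∈ D then 0 else 1) = 1 := if_neg hD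
    have hset : (univ.filter fun j : Fin M => (j : ℕ) + 1 ≤ (i.succ : ℕ) ∧ j ∉ D)
        = insert i (univ.filter fun j : Fin M => (j : ℕ) + 1 ≤ (i.castSucc : ℕ) ∧ j ∉ D) := by
      ext j
      simp only [mem_filter, mem_univ, true_and, mem_insert, Fin.val_succ, Fin.coe_castSucc]
      constructor
      · rintro ⟨hj, hjD⟩
        rcases Nat.lt_or_ge (j : ℕ) (i : ℕ) with h | h
        · exact Or.inr ⟨by omega, hjD⟩
        · exact Or.inl (Fin.val_injective (by omega : (j:ℕ) = (i:ℕ)))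
      · rintro (rfl | ⟨hj, hjD⟩)
        · exact ⟨by omega, hD⟩
        · exact ⟨by omega, hjD⟩
    rw [hset, Finset.card_insert_of_notMem (by simp), h0]

lemma wt_last (D : Finset (Fin M)) : wt D (Fin.last M) = M - D.card := by
  classical
  unfold wt
  have : (univ.filter fun j : Fin M => (j : ℕ) + 1 ≤ ((Fin.last M) : ℕ) ∧ j ∉ D) = Dᶜ := by
    ext j
    simp only [mem_filter, mem_univ, true_and, mem_compl, Fin.val_last]
    exact ⟨fun h => h.2, fun h => ⟨j.isLt, h⟩⟩
  rw [this, Finset.card_compl]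
  simp

lemma wt_le (D : Finset (Fin M)) (i : Fin (M+1)) : wt D i ≤ M - D.card := by
  classical
  rw [← wt_last D]
  apply Finset.card_le_card
  intro j hj
  rw [Finset.mem_filter] at hj ⊢
  exact ⟨hj.1, by have := j.isLt; simp only [Fin.val_last]; omega, hj.2.2⟩

lemma card_strictMono_fun (A B : ℕ) :
    Fintype.card {h : Fin A → Fin B // StrictMono h} = B.choose A := by
  classical
  have e : {h : Fin A → Fin B // StrictMono h} ≃ {s : Finset (Fin B) // s.card = A} := by
    refine ⟨fun h => ⟨univ.image h.1, ?_⟩,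
      fun s => ⟨s.1.orderEmbOfFin s.2, (s.1.orderEmbOfFin s.2).strictMono⟩, ?_, ?_⟩
    · rw [Finset.card_image_of_injective _ h.2.injective, card_univ, Fintype.card_fin]
    · intro h
      apply Subtype.ext
      exact (Finset.orderEmbOfFin_unique _ (fun x => mem_image_of_mem _ (mem_univ x)) h.2).symm
    · intro s
      apply Subtype.ext
      apply Finset.coe_injective
      rw [Finset.coe_image, Finset.coe_univ, Set.image_univ]
      exact Finset.range_orderEmbOfFin s.1 s.2
  rw [Fintype.card_congr e, Fintype.card_finset_len, Fintype.card_fin]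

lemma wt_lower (D : Finset (Fin M)) (h : Fin (M+1) → Fin n) (hs : StrictMono h) :
    ∀ i, wt D i ≤ (h i : ℕ) := by
  intro i
  induction i using Fin.induction with
  | zero => rw [wt_zero]; exact Nat.zero_le _
  | succ i ih =>
    have h1 : (h i.castSucc : ℕ) < (h i.succ : ℕ) := hs (Fin.castSucc_lt_succ : i.castSucc < i.succ)
    have h2 := wt_succ D i
    by_cases hD : i ∈ D <;> simp [hD] at h2 <;> omega

lemma wt_upper (D : Finset (Fin M)) (h : Fin (M+1) → Fin (n + (M - D.card)))
    (hs : StrictMono h) : ∀ i, (h i : ℕ) < n + wt D i := by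
  intro i
  induction i using Fin.reverseInduction with
  | last =>
    have := (h (Fin.last M)).isLt
    rw [wt_last]
    omega
  | cast i ih =>
    have h1 : (h i.castSucc : ℕ) < (h i.succ : ℕ) := hs (Fin.castSucc_lt_succ : i.castSucc < i.succ)
    have h2 := wt_succ D i
    by_cases hD : i ∈ D <;> simp [hD] at h2 <;> omega

lemma card_mono_strictAt (n : ℕ) (D : Finset (Fin M)) :
    Fintype.card {g : Fin (M+1) → Fin n // Monotone g ∧ ∀ i ∈ D, g i.castSucc < g i.succ}
      = (n + (M - D.card)).choose (M+1) := by
  classical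
  have e : {g : Fin (M+1) → Fin n // Monotone g ∧ ∀ i ∈ D, g i.castSucc < g i.succ}
      ≃ {h : Fin (M+1) → Fin (n + (M - D.card)) // StrictMono h} := by
    refine ⟨fun g => ⟨fun i => ⟨(g.1 i : ℕ) + wt D i, ?_⟩, ?_⟩,
            fun h => ⟨fun i => ⟨(h.1 i : ℕ) - wt D i, ?_⟩, ?_, ?_⟩, ?_, ?_⟩
    · have := (g.1 i).isLt
      have := wt_le D i
      omega
    · rw [Fin.strictMono_iff_lt_succ]
      intro i
      have h2 := wt_succ D i
      rw [Fin.lt_def]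
      simp only
      by_cases hD : i ∈ D
      · have h3 : (g.1 i.castSucc : ℕ) < g.1 i.succ := g.2.2 i hD
        simp [hD] at h2
        omega
      · have h3 : (g.1 i.castSucc : ℕ) ≤ g.1 i.succ := g.2.1 (Fin.castSucc_le_succ i)
        simp [hD] at h2
        omega
    · have := wt_upper D h.1 h.2 i
      have := wt_lower D h.1 h.2 i
      omega
    · rw [Fin.monotone_iff_le_succ]
      intro i
      have h1 : (h.1 i.castSucc : ℕ) < (h.1 i.succ : ℕ) := h.2 (Fin.castSucc_lt_succ : i.castSucc < i.succ)
      have h2 := wt_succ D i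
      have h3 := wt_lower D h.1 h.2 i.castSucc
      rw [Fin.le_def]
      simp only
      by_cases hD : i ∈ D <;> simp [hD] at h2 <;> omega
    · intro i hD
      have h1 : (h.1 i.castSucc : ℕ) < (h.1 i.succ : ℕ) := h.2 (Fin.castSucc_lt_succ : i.castSucc < i.succ)
      have h2 := wt_succ D i
      have h3 := wt_lower D h.1 h.2 i.castSucc
      rw [Fin.lt_def]
      simp only
      simp [hD] at h2
      omega
    · intro g
      apply Subtype.ext
      funext i
      apply Fin.ext
      simp only
      omega
    · intro h
      apply Subtype.ext
      funext i
      apply Fin.ext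
      have := wt_lower D h.1 h.2 i
      simp only
      omega
  rw [Fintype.card_congr e, card_strictMono_fun]

lemma pair_iff_consec (g : Fin (M+1) → Fin n) (hg : Monotone g)
    (σ : Equiv.Perm (Fin (M+1))) :
    (∀ i j, i < j → g i = g j → σ i < σ j) ↔
      ∀ i : Fin M, σ i.succ < σ i.castSucc → g i.castSucc < g i.succ := by
  constructor
  · intro H i hd
    rcases lt_or_eq_of_le (hg (Fin.castSucc_le_succ i)) with h | h
    · exact h
    · exact absurd (H _ _ (Fin.castSucc_lt_succ : i.castSucc < i.succ) h) (asymm hd)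
  · intro H i j hij heq
    induction j using Fin.induction generalizing i with
    | zero => exact absurd hij (Fin.not_lt_zero i)
    | succ k ih =>
      have hik : (i : ℕ) ≤ (k : ℕ) := by
        rw [Fin.lt_def] at hij
        simp only [Fin.val_succ] at hij
        omega
      have hik' : i ≤ k.castSucc := by
        rw [Fin.le_def]
        simpa using hik
      have h1 : g i ≤ g k.castSucc := hg hik'
      have h2 : g k.castSucc ≤ g k.succ := hg (Fin.castSucc_le_succ k)
      have h1' : g k.castSucc ≤ g i := by rw [heq]; exact h2
      have heq2 : g k.castSucc = g k.succ := by
        apply le_antisymm h2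
        rw [← heq]; exact h1
      have hcs : σ k.castSucc < σ k.succ := by
        by_contra hcon
        rcases lt_or_eq_of_le (not_lt.mp hcon) with h | h
        · exact absurd heq2 (ne_of_lt (H k h))
        · exact absurd (σ.injective h) (Fin.ne_of_lt (Fin.castSucc_lt_succ : k.castSucc < k.succ)).symm
      rcases eq_or_lt_of_le hik' with h | h
      · rw [h]; exact hcs
      · exact lt_trans (ih i h (le_antisymm h1 h1')) hcs

/-- the reverse sort -/
def sortS (f : Fin (M+1) → Fin n) : Equiv.Perm (Fin (M+1)) :=
  (Tuple.sort (f ∘ Fin.rev)).trans (Fin.revPerm)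

lemma sortS_char {f : Fin (M+1) → Fin n} {σ : Equiv.Perm (Fin (M+1))} :
    σ = sortS f ↔
      Monotone (f ∘ σ) ∧ ∀ i j, i < j → f (σ i) = f (σ j) → σ j < σ i := by
  unfold sortS
  have key : σ = (Tuple.sort (f ∘ Fin.rev)).trans Fin.revPerm ↔
      σ.trans Fin.revPerm = Tuple.sort (f ∘ Fin.rev) := by
    constructor
    · intro h
      ext x
      simp [h]
    · intro h
      ext x
      simp [← h]
  rw [key, Tuple.eq_sort_iff]
  constructor
  · rintro ⟨h1, h2⟩
    constructor
    · intro a b hab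
      have := h1 hab
      simpa using this
    · intro i j hij heq
      have := h2 i j hij (by simpa using heq)
      simpa [Fin.rev_lt_rev] using this
  · rintro ⟨h1, h2⟩
    constructor
    · intro a b hab
      have := h1 hab
      simpa using this
    · intro i j hij heq
      have := h2 i j hij (by simpa using heq)
      simpa [Fin.rev_lt_rev] using this

lemma pair_iff_consec_rev (g : Fin (M+1) → Fin n) (hg : Monotone g)
    (σ : Equiv.Perm (Fin (M+1))) :
    (∀ i j, i < j → g i = g j → σ j < σ i) ↔
      ∀ i : Fin M, σ i.castSucc < σ i.succ → g i.castSucc < g i.succ := by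
  have := pair_iff_consec g hg (σ.trans Fin.revPerm)
  simp only [Equiv.trans_apply, Fin.revPerm_apply, Fin.rev_lt_rev] at this
  exact this

variable (E : Finset (Fin (M+1) × Fin (M+1)))

/-- the set of topological sorts -/
def L : Finset (Equiv.Perm (Fin (M+1))) :=
  univ.filter fun σ => ∀ e ∈ E, σ.symm e.1 < σ.symm e.2

lemma mem_L_iff (σ : Equiv.Perm (Fin (M+1))) :
    σ ∈ L E ↔ ∀ e ∈ E, σ.symm e.1 < σ.symm e.2 := by
  rw [L, mem_filter]
  exact ⟨fun h => h.2, fun h => ⟨mem_univ _, h⟩⟩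

lemma sort_mem_L (hE : ∀ e ∈ E, e.1 < e.2) {f : Fin (M+1) → Fin n}
    (hf : ∀ e ∈ E, f e.1 ≤ f e.2) : Tuple.sort f ∈ L E := by
  rw [mem_L_iff]
  intro e he
  set σ := Tuple.sort f with hσ
  have hchar := (Tuple.eq_sort_iff (f := f) (σ := σ)).mp hσ
  have ha : σ (σ.symm e.1) = e.1 := Equiv.apply_symm_apply _ _
  have hb : σ (σ.symm e.2) = e.2 := Equiv.apply_symm_apply _ _
  have hne : σ.symm e.1 ≠ σ.symm e.2 := fun h => (hE e he).ne (by rw [← ha, ← hb, h])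
  rcases lt_trichotomy (σ.symm e.1) (σ.symm e.2) with h | h | h
  · exact h
  · exact absurd h hne
  · exfalso
    have h1 : f (σ (σ.symm e.2)) ≤ f (σ (σ.symm e.1)) := hchar.1 h.le
    rw [ha, hb] at h1
    have heq : f (σ (σ.symm e.2)) = f (σ (σ.symm e.1)) := by
      rw [ha, hb]
      exact le_antisymm h1 (hf e he)
    have := hchar.2 _ _ h heq
    rw [ha, hb] at this
    exact absurd this (asymm (hE e he))

lemma sortS_mem_L (hE : ∀ e ∈ E, e.1 < e.2) {f : Fin (M+1) → Fin n}
    (hf : ∀ e ∈ E, f e.1 < f e.2) : sortS f ∈ L E := by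
  rw [mem_L_iff]
  intro e he
  set σ := sortS f with hσ
  have hchar := (sortS_char (f := f) (σ := σ)).mp hσ
  have ha : σ (σ.symm e.1) = e.1 := Equiv.apply_symm_apply _ _
  have hb : σ (σ.symm e.2) = e.2 := Equiv.apply_symm_apply _ _
  have hne : σ.symm e.1 ≠ σ.symm e.2 := fun h => (hE e he).ne (by rw [← ha, ← hb, h])
  rcases lt_trichotomy (σ.symm e.1) (σ.symm e.2) with h | h | h
  · exact h
  · exact absurd h hne
  · exfalso
    have h1 : f (σ (σ.symm e.2)) ≤ f (σ (σ.symm e.1)) := hchar.1 h.le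
    rw [ha, hb] at h1
    exact absurd h1 (not_le.mpr (hf e he))

lemma cardWeak (hE : ∀ e ∈ E, e.1 < e.2) (n : ℕ) :
    Fintype.card {f : Fin (M+1) → Fin n // ∀ e ∈ E, f e.1 ≤ f e.2}
      = ∑ σ ∈ L E, (n + (M - (des σ).card)).choose (M+1) := by
  classical
  set T := {f : Fin (M+1) → Fin n // ∀ e ∈ E, f e.1 ≤ f e.2} with hT
  let φ : T → {σ // σ ∈ L E} := fun f => ⟨Tuple.sort f.1, sort_mem_L E hE f.2⟩
  have e2 : ∀ σ : {σ // σ ∈ L E}, {f : T // φ f = σ} ≃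
      {g : Fin (M+1) → Fin n // Monotone g ∧ ∀ i ∈ des σ.1, g i.castSucc < g i.succ} := by
    intro σ
    have hL := (mem_L_iff E σ.1).mp σ.2
    refine ⟨fun f => ⟨f.1.1 ∘ σ.1, ?_⟩, fun g => ⟨⟨g.1 ∘ σ.1.symm, ?_⟩, ?_⟩, ?_, ?_⟩
    · have hs : σ.1 = Tuple.sort f.1.1 := (congrArg Subtype.val f.2).symm
      have hchar := (Tuple.eq_sort_iff).mp hs
      refine ⟨hchar.1, fun i hi => ?_⟩
      rw [des, mem_filter] at hi
      exact (pair_iff_consec _ hchar.1 σ.1).mp hchar.2 i hi.2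
    · intro e he
      exact g.2.1 (hL e he).le
    · apply Subtype.ext
      show Tuple.sort (g.1 ∘ ⇑(σ.1).symm) = σ.1
      symm
      rw [Tuple.eq_sort_iff]
      have hfun : (g.1 ∘ ⇑σ.1.symm) ∘ ⇑σ.1 = g.1 := by
        funext x
        simp
      constructor
      · rw [hfun]
        exact g.2.1
      · intro i j hij heq
        simp only [Function.comp_apply, Equiv.symm_apply_apply] at heq
        exact (pair_iff_consec g.1 g.2.1 σ.1).mpr
          (fun i hd => g.2.2 i (by rw [des, mem_filter]; exact ⟨mem_univ _, hd⟩)) i j hij heq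
    · intro f
      apply Subtype.ext
      apply Subtype.ext
      funext x
      simp
    · intro g
      apply Subtype.ext
      funext x
      simp
  calc Fintype.card T = Fintype.card (Σ σ : {σ // σ ∈ L E}, {f : T // φ f = σ}) :=
        Fintype.card_congr (Equiv.sigmaFiberEquiv φ).symm
    _ = ∑ σ : {σ // σ ∈ L E}, Fintype.card {f : T // φ f = σ} := Fintype.card_sigma
    _ = ∑ σ : {σ // σ ∈ L E}, (n + (M - (des σ.1).card)).choose (M+1) := by
        apply Finset.sum_congr rfl
        intro σ _
        rw [Fintype.card_congr (e2 σ), card_mono_strictAt]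
    _ = ∑ σ ∈ L E, (n + (M - (des σ).card)).choose (M+1) :=
        Finset.sum_coe_sort (L E) (fun σ => (n + (M - (des σ).card)).choose (M+1))

lemma cardStrict (hE : ∀ e ∈ E, e.1 < e.2) (n : ℕ) :
    Fintype.card {f : Fin (M+1) → Fin n // ∀ e ∈ E, f e.1 < f e.2}
      = ∑ σ ∈ L E, (n + (des σ).card).choose (M+1) := by
  classical
  set T := {f : Fin (M+1) → Fin n // ∀ e ∈ E, f e.1 < f e.2} with hT
  let φ : T → {σ // σ ∈ L E} := fun f => ⟨sortS f.1, sortS_mem_L E hE f.2⟩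
  have e2 : ∀ σ : {σ // σ ∈ L E}, {f : T // φ f = σ} ≃
      {g : Fin (M+1) → Fin n // Monotone g ∧ ∀ i ∈ asc σ.1, g i.castSucc < g i.succ} := by
    intro σ
    have hL := (mem_L_iff E σ.1).mp σ.2
    refine ⟨fun f => ⟨f.1.1 ∘ σ.1, ?_⟩, fun g => ⟨⟨g.1 ∘ σ.1.symm, ?_⟩, ?_⟩, ?_, ?_⟩
    · have hs : σ.1 = sortS f.1.1 := (congrArg Subtype.val f.2).symm
      have hchar := sortS_char.mp hs
      refine ⟨hchar.1, fun i hi => ?_⟩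
      rw [asc, mem_filter] at hi
      exact (pair_iff_consec_rev _ hchar.1 σ.1).mp hchar.2 i hi.2
    · intro e he
      have hab := hL e he
      have h1 : g.1 (σ.1.symm e.1) ≤ g.1 (σ.1.symm e.2) := g.2.1 hab.le
      rcases lt_or_eq_of_le h1 with h | h
      · exact h
      · exfalso
        have := (pair_iff_consec_rev g.1 g.2.1 σ.1).mpr
          (fun i hd => g.2.2 i (by rw [asc, mem_filter]; exact ⟨mem_univ _, hd⟩))
          _ _ hab h
        rw [Equiv.apply_symm_apply, Equiv.apply_symm_apply] at this
        exact absurd this (asymm (hE e he))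
    · apply Subtype.ext
      show sortS (g.1 ∘ ⇑(σ.1).symm) = σ.1
      symm
      rw [sortS_char]
      have hfun : (g.1 ∘ ⇑σ.1.symm) ∘ ⇑σ.1 = g.1 := by
        funext x
        simp
      constructor
      · rw [hfun]
        exact g.2.1
      · intro i j hij heq
        simp only [Function.comp_apply, Equiv.symm_apply_apply] at heq
        exact (pair_iff_consec_rev g.1 g.2.1 σ.1).mpr
          (fun i hd => g.2.2 i (by rw [asc, mem_filter]; exact ⟨mem_univ _, hd⟩)) i j hij heq
    · intro f
      apply Subtype.ext
      apply Subtype.ext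
      funext x
      simp
    · intro g
      apply Subtype.ext
      funext x
      simp
  calc Fintype.card T = Fintype.card (Σ σ : {σ // σ ∈ L E}, {f : T // φ f = σ}) :=
        Fintype.card_congr (Equiv.sigmaFiberEquiv φ).symm
    _ = ∑ σ : {σ // σ ∈ L E}, Fintype.card {f : T // φ f = σ} := Fintype.card_sigma
    _ = ∑ σ : {σ // σ ∈ L E}, (n + (des σ.1).card).choose (M+1) := by
        apply Finset.sum_congr rfl
        intro σ _
        rw [Fintype.card_congr (e2 σ), card_mono_strictAt, asc_card,
          Nat.sub_sub_self (des_card_le σ.1)]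
    _ = ∑ σ ∈ L E, (n + (des σ).card).choose (M+1) :=
        Finset.sum_coe_sort (L E) (fun σ => (n + (des σ).card).choose (M+1))

lemma poly_eq_on_pos (P Q : Polynomial ℚ)
    (h : ∀ n : ℕ, 0 < n → P.eval (n : ℚ) = Q.eval (n : ℚ)) : P = Q := by
  apply Polynomial.eq_of_infinite_eval_eq
  apply Set.Infinite.mono (s := (fun n : ℕ => (n : ℚ)) '' {n | 0 < n})
  · rintro x ⟨n, hn, rfl⟩
    exact h n hn
  · apply Set.Infinite.image
    · exact fun a _ b _ hab => by exact_mod_cast hab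
    · have : {n : ℕ | 0 < n} = Set.Ioi 0 := rfl
      rw [this]
      exact Set.Ioi_infinite 0

theorem reduced (M : ℕ) (E : Finset (Fin (M+1) × Fin (M+1))) (hE : ∀ e ∈ E, e.1 < e.2)
    (P : Polynomial ℚ)
    (hP : ∀ n : ℕ, 0 < n →
      P.eval (n : ℚ) = Fintype.card {f : Fin (M+1) → Fin n // ∀ e ∈ E, f e.1 < f e.2}) :
    ∀ n : ℕ, 0 < n →
      (-1 : ℚ) ^ (M+1) * P.eval (-(n : ℚ)) =
        Fintype.card {f : Fin (M+1) → Fin n // ∀ e ∈ E, f e.1 ≤ f e.2} := by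
  classical
  have hfacne : ((Nat.factorial (M+1) : ℕ) : ℚ) ≠ 0 :=
    Nat.cast_ne_zero.mpr (Nat.factorial_ne_zero (M+1))
  set Q : Polynomial ℚ := Polynomial.C ((Nat.factorial (M+1) : ℕ) : ℚ)⁻¹ *
      ∑ σ ∈ L E, (descPochhammer ℚ (M+1)).comp
        (Polynomial.X + Polynomial.C (((des σ).card : ℕ) : ℚ)) with hQdef
  have hQeval : ∀ x : ℚ, Q.eval x = ((Nat.factorial (M+1) : ℕ) : ℚ)⁻¹ *
      ∑ σ ∈ L E, (descPochhammer ℚ (M+1)).eval (x + ((des σ).card : ℚ)) := by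
    intro x
    rw [hQdef, Polynomial.eval_mul, Polynomial.eval_C, Polynomial.eval_finset_sum]
    congr 1
    refine sum_congr rfl fun σ _ => ?_
    rw [Polynomial.eval_comp, Polynomial.eval_add, Polynomial.eval_X, Polynomial.eval_C]
  have hQpos : ∀ m : ℕ, Q.eval ((m : ℚ)) =
      ((∑ σ ∈ L E, (m + (des σ).card).choose (M+1) : ℕ) : ℚ) := by
    intro m
    rw [hQeval]
    have hterm : ∀ σ ∈ L E, (descPochhammer ℚ (M+1)).eval ((m:ℚ) + ((des σ).card : ℚ))
        = ((Nat.factorial (M+1) : ℕ) : ℚ) * (((m + (des σ).card).choose (M+1) : ℕ) : ℚ) := by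
      intro σ _
      have h1 : ((m:ℚ) + ((des σ).card:ℚ)) = (((m + (des σ).card : ℕ)) : ℚ) := by push_cast; ring
      rw [h1, descPochhammer_eval_eq_descFactorial, Nat.descFactorial_eq_factorial_mul_choose]
      push_cast
      ring
    rw [sum_congr rfl hterm, ← Finset.mul_sum, ← mul_assoc, inv_mul_cancel₀ hfacne, one_mul]
    push_cast
    ring
  have hPQ : P = Q := by
    apply poly_eq_on_pos
    intro m hm
    rw [hP m hm, hQpos m, cardStrict E hE m]
  intro n hn
  rw [hPQ, hQeval]
  have hterm : ∀ σ ∈ L E, (descPochhammer ℚ (M+1)).eval (-(n:ℚ) + ((des σ).card : ℚ))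
      = ((-1:ℚ)^(M+1) * ((Nat.factorial (M+1) : ℕ) : ℚ)) *
          (((n + (M - (des σ).card)).choose (M+1) : ℕ) : ℚ) := by
    intro σ _
    have hd := des_card_le σ
    have harg : (-(n:ℚ) + ((des σ).card : ℚ)) - ((M+1 : ℕ) : ℚ) + 1
        = -((((n + (M - (des σ).card) : ℕ))) : ℚ) := by
      have hc : ((M - (des σ).card : ℕ) : ℚ) = (M : ℚ) - ((des σ).card : ℚ) :=
        Nat.cast_sub hd
      push_cast [hc]
      ring
    rw [descPochhammer_eval_eq_ascPochhammer, harg, ascPochhammer_eval_neg_eq_descPochhammer,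
      descPochhammer_eval_eq_descFactorial, Nat.descFactorial_eq_factorial_mul_choose]
    push_cast
    ring
  rw [sum_congr rfl hterm, ← Finset.mul_sum, cardWeak E hE n]
  push_cast
  field_simp
  ring_nf
  have h1 : (-1:ℚ)^(M*2) = 1 := by
    rw [mul_comm, pow_mul]
    norm_num
  rw [h1, mul_one]

end SWCR

lemma exists_topo {I : Type*} [Fintype I] (E : Finset (I × I))
    (hacyc : ¬ ∃ (k : ℕ) (v : ℕ → I), 0 < k ∧ v 0 = v k ∧ ∀ m < k, (v m, v (m + 1)) ∈ E) :
    ∃ ι : I ≃ Fin (Fintype.card I), ∀ e ∈ E, ι e.1 < ι e.2 := by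
  classical
  have hpath : ∀ a b : I, Relation.TransGen (fun x y : I => (x, y) ∈ E) a b →
      ∃ (k : ℕ) (v : ℕ → I), 0 < k ∧ v 0 = a ∧ v k = b ∧ ∀ m < k, (v m, v (m+1)) ∈ E := by
    intro a b h
    induction h with
    | @single c h =>
      refine ⟨1, fun m => if m = 0 then a else c, one_pos, by simp, by simp, ?_⟩
      intro m hm
      have : m = 0 := by omega
      subst this
      simpa using h
    | @tail c d hab hbc ih =>
      obtain ⟨k, v, hk, h0, hkb, hstep⟩ := ih
      refine ⟨k+1, fun m => if m ≤ k then v m else d, by omega,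
        by simp [Nat.zero_le, h0],
        by show (if k+1 ≤ k then v (k+1) else d) = d; rw [if_neg (by omega)], ?_⟩
      intro m hm
      by_cases hmk : m < k
      · have h1 : m ≤ k := le_of_lt hmk
        have h2 : m + 1 ≤ k := hmk
        simp only [if_pos h1, if_pos h2]
        exact hstep m hmk
      · have hmeq : m = k := by omega
        subst hmeq
        show ((if m ≤ m then v m else d), (if m+1 ≤ m then v (m+1) else d)) ∈ E
        rw [if_pos (le_refl m), if_neg (show ¬ m+1 ≤ m by omega), hkb]
        exact hbc
  have hT : ∀ a, ¬ Relation.TransGen (fun x y : I => (x, y) ∈ E) a a := by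
    intro a ha
    obtain ⟨k, v, hk, h0, hka, hstep⟩ := hpath a a ha
    exact hacyc ⟨k, v, hk, by rw [h0, hka], hstep⟩
  letI : PartialOrder I :=
    { le := fun a b => a = b ∨ Relation.TransGen (fun x y : I => (x, y) ∈ E) a b
      le_refl := fun a => Or.inl rfl
      le_trans := by
        rintro a b c (rfl | hab) (h | hbc)
        · exact Or.inl h
        · exact Or.inr hbc
        · exact Or.inr (h ▸ hab)
        · exact Or.inr (hab.trans hbc)
      le_antisymm := by
        rintro a b (rfl | hab) (h | hba)
        · rfl
        · rfl
        · exact h.symm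
        · exact absurd (hab.trans hba) (hT a) }
  letI : Fintype (LinearExtension I) := ‹Fintype I›
  have hcard : Fintype.card (LinearExtension I) = Fintype.card I := rfl
  let e := monoEquivOfFin (LinearExtension I) hcard
  let eqv : I ≃ LinearExtension I := Equiv.refl I
  refine ⟨eqv.trans e.symm.toEquiv, ?_⟩
  intro ed hed
  have hinj : ed.1 ≠ ed.2 := by
    intro h
    have hpair : ed = (ed.1, ed.1) := Prod.ext rfl h.symm
    exact hacyc ⟨1, fun _ => ed.1, one_pos, rfl, by
      intro m hm
      have : m = 0 := by omega
      subst this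
      exact hpair ▸ hed⟩
  have hle : toLinearExtension ed.1 ≤ toLinearExtension ed.2 :=
    toLinearExtension.monotone' (Or.inr (Relation.TransGen.single hed))
  have hlt : toLinearExtension ed.1 < toLinearExtension ed.2 :=
    lt_of_le_of_ne hle (fun hh => hinj hh)
  exact e.symm.strictMono hlt

theorem strict_weak_chromatic_reciprocity {I : Type*} [Fintype I]
    (E : Finset (I × I)) (hE : ∀ e ∈ E, e.1 ≠ e.2)
    (hacyc : ¬ ∃ (k : ℕ) (v : ℕ → I), 0 < k ∧ v 0 = v k ∧ ∀ m < k, (v m, v (m + 1)) ∈ E)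
    (P : Polynomial ℚ)
    (hP : ∀ n : ℕ, 0 < n →
      P.eval (n : ℚ) = Nat.card {f : I → Fin n // ∀ e ∈ E, f e.1 < f e.2}) :
    ∀ n : ℕ, 0 < n →
      (-1 : ℚ) ^ Fintype.card I * P.eval (-(n : ℚ)) =
        Nat.card {f : I → Fin n // ∀ e ∈ E, f e.1 ≤ f e.2} := by
  classical
  intro n hn
  rcases hc : Fintype.card I with _ | M
  · -- I is empty
    haveI : IsEmpty I := Fintype.card_eq_zero_iff.mp hc
    have huniq : ∀ (cond : (I → Fin n) → Prop), (∀ f, cond f) →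
        Nat.card {f : I → Fin n // cond f} = 1 := by
      intro cond hcond
      haveI : Unique {f : I → Fin n // cond f} :=
        ⟨⟨⟨fun x => isEmptyElim x, hcond _⟩⟩,
          fun a => Subtype.ext (funext fun x => isEmptyElim x)⟩
      exact Nat.card_unique
    have hPone : P = Polynomial.C 1 := by
      apply SWCR.poly_eq_on_pos
      intro m hm
      rw [hP m hm]
      have huniq' : Nat.card {f : I → Fin m // ∀ e ∈ E, f e.1 < f e.2} = 1 := by
        haveI : Unique {f : I → Fin m // ∀ e ∈ E, f e.1 < f e.2} :=
          ⟨⟨⟨fun x => isEmptyElim x, fun e he => isEmptyElim e.1⟩⟩,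
            fun a => Subtype.ext (funext fun x => isEmptyElim x)⟩
        exact Nat.card_unique
      rw [huniq']
      simp
    rw [hPone, huniq _ (fun f e he => isEmptyElim e.1)]
    simp
  · -- I has cardinality M + 1
    obtain ⟨ι₀, hι₀⟩ := exists_topo E hacyc
    let ι : I ≃ Fin (M+1) := ι₀.trans (finCongr hc)
    have hι : ∀ e ∈ E, ι e.1 < ι e.2 := by
      intro e he
      have := hι₀ e he
      simp only [ι, Equiv.trans_apply, finCongr_apply, Fin.lt_def, Fin.coe_cast]
      rwa [Fin.lt_def] at this
    set E' : Finset (Fin (M+1) × Fin (M+1)) := E.image (fun e => (ι e.1, ι e.2)) with hE'def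
    have hE' : ∀ e' ∈ E', e'.1 < e'.2 := by
      intro e' he'
      rw [hE'def, mem_image] at he'
      obtain ⟨e, he, rfl⟩ := he'
      exact hι e he
    have key : ∀ (m : ℕ) (c : Fin m → Fin m → Prop),
        {f : I → Fin m // ∀ e ∈ E, c (f e.1) (f e.2)} ≃
          {g : Fin (M+1) → Fin m // ∀ e' ∈ E', c (g e'.1) (g e'.2)} := by
      intro m c
      refine ⟨fun f => ⟨f.1 ∘ ι.symm, ?_⟩, fun g => ⟨g.1 ∘ ι, ?_⟩, ?_, ?_⟩
      · intro e' he'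
        rw [hE'def, mem_image] at he'
        obtain ⟨e, he, rfl⟩ := he'
        simp only [Function.comp_apply, Equiv.symm_apply_apply]
        exact f.2 e he
      · intro e he
        exact g.2 (ι e.1, ι e.2) (mem_image_of_mem _ he)
      · intro f
        apply Subtype.ext
        funext x
        simp
      · intro g
        apply Subtype.ext
        funext x
        simp
    have hstrans : ∀ m : ℕ, Nat.card {f : I → Fin m // ∀ e ∈ E, f e.1 < f e.2}
        = Fintype.card {g : Fin (M+1) → Fin m // ∀ e' ∈ E', g e'.1 < g e'.2} := by
      intro m
      rw [Nat.card_congr (key m (· < ·)), Nat.card_eq_fintype_card]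
    have hwtrans : Nat.card {f : I → Fin n // ∀ e ∈ E, f e.1 ≤ f e.2}
        = Fintype.card {g : Fin (M+1) → Fin n // ∀ e' ∈ E', g e'.1 ≤ g e'.2} := by
      rw [Nat.card_congr (key n (· ≤ ·)), Nat.card_eq_fintype_card]
    have hP' : ∀ m : ℕ, 0 < m → P.eval (m : ℚ)
        = Fintype.card {g : Fin (M+1) → Fin m // ∀ e' ∈ E', g e'.1 < g e'.2} := by
      intro m hm
      rw [hP m hm, hstrans m]
    have := SWCR.reduced M E' hE' P hP' n hn
    rw [hwtrans]
    exact this
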